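/- There exist constants c1, c2 > 0 such that the following holds. Let A : {0,1}^n -> {0,1}^d be the adversary that adaptively reads exactly d bits of its input (a depth-d decision tree) and outputs them in order, so that (A(U_n), U_m) is uniform on {0,1}^{d+m}. If m <= n - d - 2*log2(1/epsilon) - c1, then a uniformly random function f : {0,1}^n -> {0,1}^m satisfies Delta((A(U_n), f(U_n)), U_{d+m}) <= epsilon with probability at least 1 - 2^{-c2 * 2^n * epsilon^2} over the choice of f. -/

import Mathlib

open Finset Real

open Finset Real

-- Bernoulli MGF bound
lemma bern_mgf (p t : ℝ) (hp0 : 0 ≤ p) (hp1 : p ≤ 1) :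
    p * Real.exp (t * (1 - p)) + (1 - p) * Real.exp (t * (-p)) ≤ Real.exp (t ^ 2 / 2) := by
  have hc : (Real.exp t + Real.exp (-t)) / 2 ≤ Real.exp (t ^ 2 / 2) := by
    have := Real.cosh_le_exp_half_sq t
    rwa [Real.cosh_eq] at this
  have h1 : Real.exp (t * (1 - p)) ≤ p / 2 * Real.exp (-t) + (1 - p / 2) * Real.exp t := by
    have e1 : t * (1 - p) = (p / 2) • (-t) + (1 - p / 2) • t := by simp [smul_eq_mul]; ring
    rw [e1]
    have := convexOn_exp.2 (Set.mem_univ (-t)) (Set.mem_univ t)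
      (by linarith : (0:ℝ) ≤ p / 2) (by linarith : (0:ℝ) ≤ 1 - p / 2) (by ring)
    simpa [smul_eq_mul] using this
  have h2 : Real.exp (t * (-p)) ≤ (1 + p) / 2 * Real.exp (-t) + (1 - (1 + p) / 2) * Real.exp t := by
    have e2 : t * (-p) = ((1 + p) / 2) • (-t) + (1 - (1 + p) / 2) • t := by
      simp [smul_eq_mul]; ring
    rw [e2]
    have := convexOn_exp.2 (Set.mem_univ (-t)) (Set.mem_univ t)
      (by linarith : (0:ℝ) ≤ (1 + p) / 2) (by linarith : (0:ℝ) ≤ 1 - (1 + p) / 2) (by ring)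
    simpa [smul_eq_mul] using this
  have H1 := mul_le_mul_of_nonneg_left h1 hp0
  have H2 := mul_le_mul_of_nonneg_left h2 (by linarith : (0:ℝ) ≤ 1 - p)
  nlinarith [Real.exp_pos t, Real.exp_pos (-t)]

-- Chernoff counting bound
lemma chernoff_count {W Y : Type*} [Fintype W] [DecidableEq W] [Fintype Y] [Nonempty Y]
    (χ : W → Y → Prop) [∀ w y, Decidable (χ w y)] (t s : ℝ) (ht : 0 ≤ t) :
    ((univ.filter fun f : W → Y =>
        (∑ w, ((univ.filter (χ w)).card : ℝ) / Fintype.card Y) + s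
          ≤ ∑ w, (if χ w (f w) then (1:ℝ) else 0)).card : ℝ)
      ≤ (Fintype.card (W → Y)) * Real.exp ((Fintype.card W) * (t ^ 2 / 2) - t * s) := by
  classical
  set p : W → ℝ := fun w => ((univ.filter (χ w)).card : ℝ) / Fintype.card Y with hp
  have hY : (0:ℝ) < Fintype.card Y := by
    exact_mod_cast Fintype.card_pos
  have hp0 : ∀ w, 0 ≤ p w := fun w => by positivity
  have hp1 : ∀ w, p w ≤ 1 := fun w => by
    rw [hp, div_le_one hY]
    exact_mod_cast card_le_card (subset_univ _) |>.trans (le_of_eq (card_univ))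
  -- indicator
  set g : W → Y → ℝ := fun w y => Real.exp (t * ((if χ w y then (1:ℝ) else 0) - p w)) with hg
  have step1 : ((univ.filter fun f : W → Y =>
        (∑ w, p w) + s ≤ ∑ w, (if χ w (f w) then (1:ℝ) else 0)).card : ℝ)
      ≤ Real.exp (-(t * s)) * ∑ f : W → Y, ∏ w, g w (f w) := by
    rw [mul_sum]
    rw [card_eq_sum_ones, Nat.cast_sum]
    rw [← sum_filter_add_sum_filter_not (univ : Finset (W → Y))
      (fun f => (∑ w, p w) + s ≤ ∑ w, (if χ w (f w) then (1:ℝ) else 0))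
      (fun f => Real.exp (-(t * s)) * ∏ w, g w (f w))]
    have term_ge : ∀ f ∈ univ.filter fun f : W → Y =>
        (∑ w, p w) + s ≤ ∑ w, (if χ w (f w) then (1:ℝ) else 0),
        ((1:ℕ):ℝ) ≤ Real.exp (-(t * s)) * ∏ w, g w (f w) := by
      intro f hf
      have hf' := (mem_filter.mp hf).2
      have : ∏ w, g w (f w) = Real.exp (∑ w, t * ((if χ w (f w) then (1:ℝ) else 0) - p w)) := by
        rw [Real.exp_sum]
      rw [this, ← Real.exp_add]
      have hsum : ∑ w, t * ((if χ w (f w) then (1:ℝ) else 0) - p w)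
          = t * ((∑ w, (if χ w (f w) then (1:ℝ) else 0)) - ∑ w, p w) := by
        rw [← mul_sum, sum_sub_distrib, mul_sub]
      rw [Nat.cast_one]
      apply Real.one_le_exp
      rw [hsum]
      nlinarith
    calc (∑ f ∈ univ.filter fun f : W → Y =>
            (∑ w, p w) + s ≤ ∑ w, (if χ w (f w) then (1:ℝ) else 0), ((1:ℕ):ℝ))
        ≤ ∑ f ∈ univ.filter fun f : W → Y =>
            (∑ w, p w) + s ≤ ∑ w, (if χ w (f w) then (1:ℝ) else 0),
            Real.exp (-(t * s)) * ∏ w, g w (f w) := sum_le_sum term_ge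
      _ ≤ _ := by
          apply le_add_of_nonneg_right
          apply sum_nonneg
          intro f _
          positivity
  have swap : ∑ f : W → Y, ∏ w, g w (f w) = ∏ w, ∑ y, g w y := by
    rw [Finset.prod_univ_sum]
    rw [Fintype.piFinset_univ]
  have perw : ∀ w, ∑ y, g w y ≤ (Fintype.card Y) * Real.exp (t ^ 2 / 2) := by
    intro w
    have : ∑ y, g w y = ((univ.filter (χ w)).card : ℝ) * Real.exp (t * (1 - p w))
        + ((Fintype.card Y : ℝ) - (univ.filter (χ w)).card) * Real.exp (t * (-(p w))) := by
      rw [hg]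
      simp only
      rw [← sum_filter_add_sum_filter_not (univ : Finset Y) (χ w)]
      have e1 : ∀ y ∈ univ.filter (χ w),
          Real.exp (t * ((if χ w y then (1:ℝ) else 0) - p w)) = Real.exp (t * (1 - p w)) := by
        intro y hy; rw [if_pos (mem_filter.mp hy).2]
      have e2 : ∀ y ∈ univ.filter (fun y => ¬ χ w y),
          Real.exp (t * ((if χ w y then (1:ℝ) else 0) - p w)) = Real.exp (t * (-(p w))) := by
        intro y hy; rw [if_neg (mem_filter.mp hy).2]; ring_nf
      rw [sum_congr rfl e1, sum_congr rfl e2, sum_const, sum_const]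
      rw [nsmul_eq_mul, nsmul_eq_mul]
      have hcard : ((univ.filter (fun y => ¬ χ w y)).card : ℝ)
          = (Fintype.card Y : ℝ) - (univ.filter (χ w)).card := by
        have := Finset.card_filter_add_card_filter_not (s := (univ : Finset Y)) (p := χ w)
        rw [card_univ] at this
        have : (univ.filter (χ w)).card + (univ.filter (fun y => ¬ χ w y)).card
            = Fintype.card Y := this
        push_cast [← this]
        ring
      rw [hcard]
    rw [this]
    have hk : ((univ.filter (χ w)).card : ℝ) = p w * Fintype.card Y := by
      rw [hp]; field_simp
    rw [hk]
    have := bern_mgf (p w) t (hp0 w) (hp1 w)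
    nlinarith [this, hY]
  have prodle : ∏ w, ∑ y, g w y ≤ ((Fintype.card Y : ℝ) * Real.exp (t ^ 2 / 2)) ^ Fintype.card W := by
    calc ∏ w, ∑ y, g w y ≤ ∏ _w : W, ((Fintype.card Y : ℝ) * Real.exp (t ^ 2 / 2)) := by
          apply Finset.prod_le_prod
          · intro w _
            apply sum_nonneg; intro y _; rw [hg]; positivity
          · intro w _; exact perw w
      _ = ((Fintype.card Y : ℝ) * Real.exp (t ^ 2 / 2)) ^ Fintype.card W := by
          rw [prod_const, card_univ]
  have final : Real.exp (-(t * s)) * ∑ f : W → Y, ∏ w, g w (f w)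
      ≤ (Fintype.card (W → Y)) * Real.exp ((Fintype.card W) * (t ^ 2 / 2) - t * s) := by
    rw [swap]
    have hcf : (Fintype.card (W → Y) : ℝ) = ((Fintype.card Y : ℝ)) ^ Fintype.card W := by
      rw [Fintype.card_fun]; push_cast; ring
    rw [hcf]
    have expand : ((Fintype.card Y : ℝ) * Real.exp (t ^ 2 / 2)) ^ Fintype.card W
        = ((Fintype.card Y : ℝ)) ^ Fintype.card W * Real.exp ((Fintype.card W) * (t ^ 2 / 2)) := by
      rw [mul_pow, ← Real.exp_nat_mul]
    calc Real.exp (-(t * s)) * ∏ w, ∑ y, g w y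
        ≤ Real.exp (-(t * s)) * (((Fintype.card Y : ℝ) * Real.exp (t ^ 2 / 2)) ^ Fintype.card W) := by
          apply mul_le_mul_of_nonneg_left prodle (le_of_lt (Real.exp_pos _))
      _ = ((Fintype.card Y : ℝ)) ^ Fintype.card W
            * Real.exp ((Fintype.card W) * (t ^ 2 / 2) - t * s) := by
          rw [expand, Real.exp_sub]
          rw [Real.exp_neg]
          field_simp
  exact step1.trans final

lemma half_abs_sum {ι : Type*} [Fintype ι] [DecidableEq ι] (a : ι → ℝ)
    [DecidablePred fun i => 0 < a i] (h : ∑ i, a i = 0) :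
    (1 / 2 : ℝ) * ∑ i, |a i| = ∑ i ∈ univ.filter fun i => 0 < a i, a i := by
  have h1 : ∑ i ∈ univ.filter (fun i => 0 < a i), |a i|
      = ∑ i ∈ univ.filter (fun i => 0 < a i), a i :=
    sum_congr rfl fun i hi => abs_of_pos (mem_filter.mp hi).2
  have h2 : ∑ i ∈ univ.filter (fun i => ¬ 0 < a i), |a i|
      = ∑ i ∈ univ.filter (fun i => ¬ 0 < a i), -a i :=
    sum_congr rfl fun i hi => abs_of_nonpos (le_of_not_gt (mem_filter.mp hi).2)
  have h3 := sum_filter_add_sum_filter_not (univ : Finset ι) (fun i => 0 < a i) a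
  have h4 := sum_filter_add_sum_filter_not (univ : Finset ι) (fun i => 0 < a i) (fun i => |a i|)
  rw [h] at h3
  rw [h1, h2, sum_neg_distrib] at h4
  linarith



set_option maxHeartbeats 2000000 in
open Classical in
/-- There are constants `c₁, c₂ > 0` such that for any regular adversary `A` reading
`d` bits (every output string has exactly `2^{n-d}` preimages) and
`m ≤ n - d - 2log₂(1/ε) - c₁`, a uniformly random `f : {0,1}ⁿ → {0,1}^m` satisfies
`Δ((A(U_n), f(U_n)), U_{d+m}) ≤ ε` with probability at least `1 - 2^{-c₂·2ⁿ·ε²}`. -/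
theorem random_function_fools_one_adversary :
    ∃ c1 : ℝ, 0 < c1 ∧ ∃ c2 : ℝ, 0 < c2 ∧
      ∀ (n d m : ℕ) (ε : ℝ) (A : (Fin n → Bool) → (Fin d → Bool)), d ≤ n → 0 < ε →
        (∀ x : Fin d → Bool,
          (Finset.univ.filter fun w : Fin n → Bool => A w = x).card = 2 ^ (n - d)) →
        (m : ℝ) ≤ (n : ℝ) - d - 2 * Real.logb 2 (1 / ε) - c1 →
        1 - (2 : ℝ) ^ (-(c2 * 2 ^ n * ε ^ 2)) ≤
          ((Finset.univ.filter fun f : (Fin n → Bool) → (Fin m → Bool) =>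
              (1 / 2 : ℝ) * ∑ x : Fin d → Bool, ∑ y : Fin m → Bool,
                  |((Finset.univ.filter fun w : Fin n → Bool =>
                      A w = x ∧ f w = y).card : ℝ) / 2 ^ n - 1 / 2 ^ (d + m)| ≤ ε).card : ℝ)
            / Fintype.card ((Fin n → Bool) → (Fin m → Bool)) := by
  refine ⟨3, by norm_num, 1/8, by norm_num, ?_⟩
  intro n d m ε A hdn hε hreg hm
  have hcardW : Fintype.card (Fin n → Bool) = 2 ^ n := by simp [Fintype.card_fun]
  have hcardY : Fintype.card (Fin m → Bool) = 2 ^ m := by simp [Fintype.card_fun]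
  have hcardXY : Fintype.card ((Fin d → Bool) × (Fin m → Bool)) = 2 ^ (d + m) := by
    simp [Fintype.card_fun, pow_add]
  have hcardF : (0:ℝ) < Fintype.card ((Fin n → Bool) → (Fin m → Bool)) := by
    exact_mod_cast Fintype.card_pos
  -- Step 1: the size constraint
  have hkey : (2:ℝ) ^ (d + m) ≤ 2 ^ n * ε ^ 2 / 8 := by
    have h1 : (m:ℝ) + d + 3 + 2 * Real.logb 2 (1/ε) ≤ n := by linarith
    have h2 : (2:ℝ) ^ ((m:ℝ) + d + 3 + 2 * Real.logb 2 (1/ε)) ≤ (2:ℝ) ^ (n:ℝ) :=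
      Real.rpow_le_rpow_of_exponent_le one_le_two h1
    have hεpos : (0:ℝ) < 1/ε := by positivity
    have h3 : (2:ℝ) ^ (2 * Real.logb 2 (1/ε)) = (1/ε) ^ 2 := by
      rw [mul_comm, Real.rpow_mul (by norm_num : (0:ℝ) ≤ 2)]
      rw [Real.rpow_logb (by norm_num) (by norm_num) hεpos]
      rw [show ((2:ℝ)) = ((2:ℕ):ℝ) by norm_num, Real.rpow_natCast]
    have h8 : (2:ℝ) ^ ((3:ℕ):ℝ) = 8 := by rw [Real.rpow_natCast]; norm_num
    have h4 : (2:ℝ) ^ ((m:ℝ) + d + 3 + 2 * Real.logb 2 (1/ε))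
        = (2:ℝ) ^ m * 2 ^ d * 8 * (1/ε)^2 := by
      rw [Real.rpow_add two_pos, h3, Real.rpow_add two_pos, Real.rpow_add two_pos]
      rw [Real.rpow_natCast, Real.rpow_natCast, show ((3:ℝ)) = ((3:ℕ):ℝ) by norm_num, h8]
    rw [h4, Real.rpow_natCast] at h2
    have hε2 : (0:ℝ) < ε^2 := by positivity
    have hid : (1/ε)^2 * ε^2 = 1 := by field_simp
    have hmul := mul_le_mul_of_nonneg_right h2 hε2.le
    have hclean : (2:ℝ)^m * 2^d * 8 ≤ 2^n * ε^2 := by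
      calc (2:ℝ)^m * 2^d * 8 = 2^m * 2^d * 8 * ((1/ε)^2 * ε^2) := by rw [hid]; ring
        _ = 2^m * 2^d * 8 * (1/ε)^2 * ε^2 := by ring
        _ ≤ 2^n * ε^2 := hmul
    rw [pow_add]
    linarith

  -- Step 2: every bad f lies in some badT
  have hsub : (univ.filter fun f : (Fin n → Bool) → (Fin m → Bool) =>
        ¬ ((1 / 2 : ℝ) * ∑ x : Fin d → Bool, ∑ y : Fin m → Bool,
            |((Finset.univ.filter fun w : Fin n → Bool =>
                A w = x ∧ f w = y).card : ℝ) / 2 ^ n - 1 / 2 ^ (d + m)| ≤ ε))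
      ⊆ (univ : Finset (Finset ((Fin d → Bool) × (Fin m → Bool)))).biUnion
        (fun T => univ.filter (fun f : (Fin n → Bool) → (Fin m → Bool) =>
          (∑ w, ((univ.filter (fun y => (A w, y) ∈ T)).card : ℝ)
              / Fintype.card (Fin m → Bool)) + ε * 2 ^ n
            ≤ ∑ w, if (A w, f w) ∈ T then (1:ℝ) else 0)) := by
    intro f hf
    rw [mem_filter] at hf
    have hbad := hf.2
    rw [mem_biUnion]
    set a : (Fin d → Bool) × (Fin m → Bool) → ℝ := fun z =>
      ((Finset.univ.filter fun w : Fin n → Bool =>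
          A w = z.1 ∧ f w = z.2).card : ℝ) / 2 ^ n - 1 / 2 ^ (d + m) with ha
    have hctot : ∑ z : (Fin d → Bool) × (Fin m → Bool),
        ((Finset.univ.filter fun w : Fin n → Bool => A w = z.1 ∧ f w = z.2).card : ℝ)
        = 2 ^ n := by
      have e : ∀ z : (Fin d → Bool) × (Fin m → Bool),
          ((Finset.univ.filter fun w : Fin n → Bool => A w = z.1 ∧ f w = z.2).card : ℝ)
          = ∑ w, if A w = z.1 ∧ f w = z.2 then (1:ℝ) else 0 :=
        fun z => (Finset.sum_boole _ _).symm
      rw [Finset.sum_congr rfl fun z _ => e z, Finset.sum_comm]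
      have inner : ∀ w, (∑ z : (Fin d → Bool) × (Fin m → Bool),
          if A w = z.1 ∧ f w = z.2 then (1:ℝ) else 0) = 1 := by
        intro w
        rw [Fintype.sum_eq_single ((A w, f w) : (Fin d → Bool) × (Fin m → Bool))]
        · simp
        · intro z hz
          apply if_neg
          intro hc
          apply hz
          have h1 := hc.1
          have h2 := hc.2
          cases z
          simp only at h1 h2
          rw [h1, h2]
      rw [Finset.sum_congr rfl fun w _ => inner w, Finset.sum_const, card_univ, hcardW]
      simp
    have hsum0 : ∑ z, a z = 0 := by
      rw [ha]
      simp only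
      rw [Finset.sum_sub_distrib, ← Finset.sum_div, hctot, Finset.sum_const, card_univ,
        hcardXY, nsmul_eq_mul]
      push_cast
      field_simp
      norm_num
    refine ⟨univ.filter fun z => 0 < a z, mem_univ _, ?_⟩
    set T := univ.filter fun z => 0 < a z with hT
    rw [mem_filter]
    refine ⟨mem_univ _, ?_⟩
    -- distance identity
    have hdist : (1 / 2 : ℝ) * ∑ x : Fin d → Bool, ∑ y : Fin m → Bool,
        |((Finset.univ.filter fun w : Fin n → Bool =>
            A w = x ∧ f w = y).card : ℝ) / 2 ^ n - 1 / 2 ^ (d + m)|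
        = ∑ z ∈ T, a z := by
      rw [hT, ← half_abs_sum a hsum0, Fintype.sum_prod_type]
    have hgt : ε < ∑ z ∈ T, a z := by
      rw [← hdist]
      exact not_le.mp hbad
    -- compute the mean
    have hμ : (∑ w, ((univ.filter (fun y => (A w, y) ∈ T)).card : ℝ)
          / Fintype.card (Fin m → Bool))
        = 2 ^ n * T.card / 2 ^ (d + m) := by
      have hq := Finset.sum_fiberwise' (univ : Finset (Fin n → Bool)) A
        (fun x => ((univ.filter (fun y => (x, y) ∈ T)).card : ℝ)
          / Fintype.card (Fin m → Bool))
      rw [← hq]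
      have hconst : ∀ x : Fin d → Bool, ∑ _w ∈ univ.filter (fun w => A w = x),
          (((univ.filter (fun y => (x, y) ∈ T)).card : ℝ) / Fintype.card (Fin m → Bool))
          = (2:ℝ) ^ (n - d) * (((univ.filter (fun y => (x, y) ∈ T)).card : ℝ) / 2 ^ m) := by
        intro x
        rw [Finset.sum_const, hreg x, nsmul_eq_mul, hcardY]
        push_cast
        ring
      rw [Finset.sum_congr rfl fun x _ => hconst x, ← Finset.mul_sum]
      have hTsplit : ∑ x : Fin d → Bool,
          (((univ.filter (fun y => (x, y) ∈ T)).card : ℝ) / 2 ^ m)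
          = T.card / 2 ^ m := by
        rw [← Finset.sum_div]
        congr 1
        have fib : ∀ x : Fin d → Bool, (T.filter fun z => z.1 = x).card
            = (univ.filter fun y : Fin m → Bool => (x, y) ∈ T).card := by
          intro x
          apply Finset.card_bij (fun z _ => z.2)
          · intro z hz
            rw [mem_filter] at hz ⊢
            refine ⟨mem_univ _, ?_⟩
            have h1 := hz.1
            have h2 := hz.2
            rwa [show ((x, z.2) : (Fin d → Bool) × (Fin m → Bool)) = z by
              rw [Prod.ext_iff]; exact ⟨h2.symm, rfl⟩]
          · intro z1 h1 z2 h2 hzz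
            rw [mem_filter] at h1 h2
            rw [Prod.ext_iff]
            exact ⟨by rw [h1.2, h2.2], hzz⟩
          · intro y hy
            rw [mem_filter] at hy
            exact ⟨(x, y), mem_filter.mpr ⟨hy.2, rfl⟩, rfl⟩
        have hT2 := Finset.card_eq_sum_card_fiberwise
          (f := fun z : (Fin d → Bool) × (Fin m → Bool) => z.1) (s := T) (t := univ)
          (fun _ _ => mem_univ _)
        calc ∑ x : Fin d → Bool, ((univ.filter (fun y => (x, y) ∈ T)).card : ℝ)
            = ∑ x : Fin d → Bool, ((T.filter fun z => z.1 = x).card : ℝ) :=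
              Finset.sum_congr rfl fun x _ => by rw [fib x]
          _ = ((∑ x : Fin d → Bool, (T.filter fun z => z.1 = x).card : ℕ) : ℝ) := by
              push_cast; rfl
          _ = (T.card : ℝ) := by rw [← hT2]
      rw [hTsplit]
      have h2nd : (2:ℝ) ^ (n - d) = 2 ^ n / 2 ^ d := by
        rw [pow_sub₀ (2:ℝ) (by norm_num) hdn]; ring
      rw [h2nd, pow_add]
      field_simp
    -- the count identity
    have hS : (∑ w, if (A w, f w) ∈ T then (1:ℝ) else 0)
        = ∑ z ∈ T, ((Finset.univ.filter fun w : Fin n → Bool =>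
            A w = z.1 ∧ f w = z.2).card : ℝ) := by
      rw [Finset.sum_boole]
      have hfib := Finset.sum_card_fiberwise_eq_card_filter (univ : Finset (Fin n → Bool)) T
        (fun w => (A w, f w))
      rw [← hfib]
      push_cast
      refine Finset.sum_congr rfl fun z _ => ?_
      congr 2
      apply Finset.filter_congr
      intro w _
      simp [Prod.ext_iff]
    rw [hμ, hS]
    have hsplit : ∑ z ∈ T, a z
        = (∑ z ∈ T, ((Finset.univ.filter fun w : Fin n → Bool =>
            A w = z.1 ∧ f w = z.2).card : ℝ)) / 2 ^ n - T.card / 2 ^ (d + m) := by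
      rw [ha]
      simp only
      rw [Finset.sum_sub_distrib, ← Finset.sum_div, Finset.sum_const, nsmul_eq_mul]
      ring
    rw [hsplit] at hgt
    have h2n : (0:ℝ) < 2 ^ n := by positivity
    have hmul := mul_lt_mul_of_pos_right hgt h2n
    rw [sub_mul, div_mul_cancel₀ _ h2n.ne'] at hmul
    have e2 : (T.card : ℝ) / 2 ^ (d + m) * 2 ^ n = 2 ^ n * T.card / 2 ^ (d + m) := by ring
    rw [e2] at hmul
    linarith
  -- Step 3: Chernoff + union bound
  have hcount : ((univ.filter fun f : (Fin n → Bool) → (Fin m → Bool) =>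
        ¬ ((1 / 2 : ℝ) * ∑ x : Fin d → Bool, ∑ y : Fin m → Bool,
            |((Finset.univ.filter fun w : Fin n → Bool =>
                A w = x ∧ f w = y).card : ℝ) / 2 ^ n - 1 / 2 ^ (d + m)| ≤ ε)).card : ℝ)
      ≤ (2:ℝ) ^ (2 ^ (d + m) : ℕ) * Fintype.card ((Fin n → Bool) → (Fin m → Bool))
          * Real.exp (-(2 ^ n * ε ^ 2 / 2)) := by
    have h3 : ∀ T : Finset ((Fin d → Bool) × (Fin m → Bool)),
        ((univ.filter (fun f : (Fin n → Bool) → (Fin m → Bool) =>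
          (∑ w, ((univ.filter (fun y => (A w, y) ∈ T)).card : ℝ)
              / Fintype.card (Fin m → Bool)) + ε * 2 ^ n
            ≤ ∑ w, if (A w, f w) ∈ T then (1:ℝ) else 0)).card : ℝ)
        ≤ Fintype.card ((Fin n → Bool) → (Fin m → Bool))
            * Real.exp (-(2 ^ n * ε ^ 2 / 2)) := by
      intro T
      have hch := chernoff_count (W := Fin n → Bool) (Y := Fin m → Bool)
        (fun w y => (A w, y) ∈ T) ε (ε * 2 ^ n) hε.le
      rw [hcardW] at hch
      push_cast at hch
      have eexp : ((2:ℝ) ^ n) * (ε ^ 2 / 2) - ε * (ε * 2 ^ n) = -(2 ^ n * ε ^ 2 / 2) := by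
        ring
      rw [eexp] at hch
      exact hch
    calc ((univ.filter fun f : (Fin n → Bool) → (Fin m → Bool) =>
        ¬ ((1 / 2 : ℝ) * ∑ x : Fin d → Bool, ∑ y : Fin m → Bool,
            |((Finset.univ.filter fun w : Fin n → Bool =>
                A w = x ∧ f w = y).card : ℝ) / 2 ^ n - 1 / 2 ^ (d + m)| ≤ ε)).card : ℝ)
        ≤ (((univ : Finset (Finset ((Fin d → Bool) × (Fin m → Bool)))).biUnion
            (fun T => univ.filter (fun f : (Fin n → Bool) → (Fin m → Bool) =>
              (∑ w, ((univ.filter (fun y => (A w, y) ∈ T)).card : ℝ)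
                  / Fintype.card (Fin m → Bool)) + ε * 2 ^ n
                ≤ ∑ w, if (A w, f w) ∈ T then (1:ℝ) else 0))).card : ℝ) := by
          exact_mod_cast Finset.card_le_card hsub
      _ ≤ ∑ T : Finset ((Fin d → Bool) × (Fin m → Bool)),
            ((univ.filter (fun f : (Fin n → Bool) → (Fin m → Bool) =>
              (∑ w, ((univ.filter (fun y => (A w, y) ∈ T)).card : ℝ)
                  / Fintype.card (Fin m → Bool)) + ε * 2 ^ n
                ≤ ∑ w, if (A w, f w) ∈ T then (1:ℝ) else 0)).card : ℝ) := by
          exact_mod_cast Finset.card_biUnion_le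
      _ ≤ ∑ _T : Finset ((Fin d → Bool) × (Fin m → Bool)),
            ((Fintype.card ((Fin n → Bool) → (Fin m → Bool)) : ℝ)
              * Real.exp (-(2 ^ n * ε ^ 2 / 2))) :=
          Finset.sum_le_sum fun T _ => h3 T
      _ = (2:ℝ) ^ (2 ^ (d + m) : ℕ) * Fintype.card ((Fin n → Bool) → (Fin m → Bool))
            * Real.exp (-(2 ^ n * ε ^ 2 / 2)) := by
          rw [Finset.sum_const, card_univ, Fintype.card_finset, hcardXY, nsmul_eq_mul]
          push_cast
          ring
  -- Step 4: arithmetic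
  have harith : (2:ℝ) ^ (2 ^ (d + m) : ℕ) * Real.exp (-(2 ^ n * ε ^ 2 / 2))
      ≤ (2:ℝ) ^ (-(1/8 * 2 ^ n * ε ^ 2)) := by
    have haa : (0:ℝ) ≤ 2 ^ n * ε ^ 2 := by positivity
    have h1 : (2:ℝ) ^ (2 ^ (d + m) : ℕ) ≤ (2:ℝ) ^ ((2 ^ n * ε ^ 2 / 8 : ℝ)) := by
      rw [← Real.rpow_natCast 2 (2 ^ (d + m))]
      apply Real.rpow_le_rpow_of_exponent_le one_le_two
      push_cast
      exact hkey
    have hlog : Real.log 2 ≤ 1 := by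
      have := Real.log_two_lt_d9; linarith
    have hlog0 : 0 ≤ Real.log 2 := Real.log_nonneg (by norm_num)
    have h2 : Real.exp (-(2 ^ n * ε ^ 2 / 2)) ≤ (2:ℝ) ^ (-(2 ^ n * ε ^ 2 / 2) : ℝ) := by
      rw [Real.rpow_def_of_pos two_pos]
      apply Real.exp_le_exp.2
      nlinarith
    calc (2:ℝ) ^ (2 ^ (d + m) : ℕ) * Real.exp (-(2 ^ n * ε ^ 2 / 2))
        ≤ (2:ℝ) ^ ((2 ^ n * ε ^ 2 / 8 : ℝ)) * (2:ℝ) ^ (-(2 ^ n * ε ^ 2 / 2) : ℝ) := by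
          apply mul_le_mul h1 h2 (Real.exp_pos _).le (Real.rpow_nonneg (by norm_num) _)
      _ = (2:ℝ) ^ ((2 ^ n * ε ^ 2 / 8) + (-(2 ^ n * ε ^ 2 / 2))) :=
          (Real.rpow_add two_pos _ _).symm
      _ ≤ (2:ℝ) ^ (-(1/8 * 2 ^ n * ε ^ 2)) := by
          apply Real.rpow_le_rpow_of_exponent_le one_le_two
          nlinarith
  -- Step 5: conclude
  have hPsplit := Finset.card_filter_add_card_filter_not
    (s := (univ : Finset ((Fin n → Bool) → (Fin m → Bool))))
    (p := fun f : (Fin n → Bool) → (Fin m → Bool) =>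
      (1 / 2 : ℝ) * ∑ x : Fin d → Bool, ∑ y : Fin m → Bool,
          |((Finset.univ.filter fun w : Fin n → Bool =>
              A w = x ∧ f w = y).card : ℝ) / 2 ^ n - 1 / 2 ^ (d + m)| ≤ ε)
  rw [card_univ] at hPsplit
  have hδ : (0:ℝ) ≤ (2:ℝ) ^ (-(1/8 * 2 ^ n * ε ^ 2)) := Real.rpow_nonneg (by norm_num) _
  have hbound : ((univ.filter fun f : (Fin n → Bool) → (Fin m → Bool) =>
        ¬ ((1 / 2 : ℝ) * ∑ x : Fin d → Bool, ∑ y : Fin m → Bool,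
            |((Finset.univ.filter fun w : Fin n → Bool =>
                A w = x ∧ f w = y).card : ℝ) / 2 ^ n - 1 / 2 ^ (d + m)| ≤ ε)).card : ℝ)
      ≤ (2:ℝ) ^ (-(1/8 * 2 ^ n * ε ^ 2))
          * Fintype.card ((Fin n → Bool) → (Fin m → Bool)) := by
    calc _ ≤ (2:ℝ) ^ (2 ^ (d + m) : ℕ)
          * Fintype.card ((Fin n → Bool) → (Fin m → Bool))
          * Real.exp (-(2 ^ n * ε ^ 2 / 2)) := hcount
      _ = ((2:ℝ) ^ (2 ^ (d + m) : ℕ) * Real.exp (-(2 ^ n * ε ^ 2 / 2)))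
          * Fintype.card ((Fin n → Bool) → (Fin m → Bool)) := by ring
      _ ≤ _ := mul_le_mul_of_nonneg_right harith hcardF.le
  rw [le_div_iff₀ hcardF]
  have hcast : ((univ.filter fun f : (Fin n → Bool) → (Fin m → Bool) =>
        (1 / 2 : ℝ) * ∑ x : Fin d → Bool, ∑ y : Fin m → Bool,
            |((Finset.univ.filter fun w : Fin n → Bool =>
                A w = x ∧ f w = y).card : ℝ) / 2 ^ n - 1 / 2 ^ (d + m)| ≤ ε).card : ℝ)
      + ((univ.filter fun f : (Fin n → Bool) → (Fin m → Bool) =>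
        ¬ ((1 / 2 : ℝ) * ∑ x : Fin d → Bool, ∑ y : Fin m → Bool,
            |((Finset.univ.filter fun w : Fin n → Bool =>
                A w = x ∧ f w = y).card : ℝ) / 2 ^ n - 1 / 2 ^ (d + m)| ≤ ε)).card : ℝ)
      = Fintype.card ((Fin n → Bool) → (Fin m → Bool)) := by
    exact_mod_cast congrArg (Nat.cast (R := ℝ)) hPsplit
  nlinarith [hbound, hcast, hδ, hcardF]
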